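/- If DMU_k is an extreme CCR-efficient DMU and model (5) for input l (min θ s.t. Σ_{j∈E∖{k}} λ_j x_{lj} ≤ θ x_{lk}, Σ_{j∈E∖{k}} λ_j x_{ij} ≤ x_{ik} for i ≠ l, Σ_{j∈E∖{k}} λ_j y_{rj} ≥ y_{rk}, λ ≥ 0) is feasible, then its optimal value satisfies θ* ≥ 1. Combined with the non-extreme case, θ* = 1 for all l (and φ* = 1 for all q in the output version) if and only if DMU_k is a non-extreme CCR-efficient DMU. -/
import Mathlib


/-- Feasibility of the input-oriented super-efficiency model (5). -/
def Feas5 {n m s : ℕ} (X : Fin n → Fin m → ℝ) (Y : Fin n → Fin s → ℝ)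
    (E : Finset (Fin n)) (k : Fin n) (li : Fin m) (θ : ℝ) (l : Fin n → ℝ) : Prop :=
  (∀ j, 0 ≤ l j) ∧
  (∑ j ∈ E.erase k, l j * X j li ≤ θ * X k li) ∧
  (∀ i, i ≠ li → ∑ j ∈ E.erase k, l j * X j i ≤ X k i) ∧
  (∀ r, Y k r ≤ ∑ j ∈ E.erase k, l j * Y j r)

/-- Feasibility of the output-oriented super-efficiency model (6). -/
def Feas6 {n m s : ℕ} (X : Fin n → Fin m → ℝ) (Y : Fin n → Fin s → ℝ)
    (E : Finset (Fin n)) (k : Fin n) (q : Fin s) (φ : ℝ) (mu : Fin n → ℝ) : Prop :=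
  (∀ j, 0 ≤ mu j) ∧
  (∀ i, ∑ j ∈ E.erase k, mu j * X j i ≤ X k i) ∧
  (φ * Y k q ≤ ∑ j ∈ E.erase k, mu j * Y j q) ∧
  (∀ r, r ≠ q → Y k r ≤ ∑ j ∈ E.erase k, mu j * Y j r)

/-- `DMU_k` is non-extreme: a nonnegative combination of the other efficient DMUs. -/
def NonExtreme {n m s : ℕ} (X : Fin n → Fin m → ℝ) (Y : Fin n → Fin s → ℝ)
    (E : Finset (Fin n)) (k : Fin n) : Prop :=
  ∃ l : Fin n → ℝ, (∀ j, 0 ≤ l j) ∧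
    (∀ i, ∑ j ∈ E.erase k, l j * X j i = X k i) ∧
    (∀ r, ∑ j ∈ E.erase k, l j * Y j r = Y k r)

/-- Property 1 (second half) together with its Corollary. Suppose `DMU_k` is
CCR-efficient, i.e. non-dominated by any point producible from the efficient set `E`.
Then: (1) if `DMU_k` is extreme and the model (5) at input `li` is feasible, its optimal
value satisfies `θ* ≥ 1` (every feasible value is at least 1); and (2) `θ* = 1` for all
inputs and `φ* = 1` for all outputs if and only if `DMU_k` is non-extreme. -/
theorem superefficiency_ge_one_and_corollary
    {n m s : ℕ} (X : Fin n → Fin m → ℝ) (Y : Fin n → Fin s → ℝ)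
    (hX : ∀ j i, 0 < X j i) (hY : ∀ j r, 0 < Y j r)
    (E : Finset (Fin n)) (k : Fin n) (hk : k ∈ E)
    (heff : ¬ ∃ l : Fin n → ℝ, (∀ j, 0 ≤ l j) ∧
      (∀ i, ∑ j ∈ E, l j * X j i ≤ X k i) ∧
      (∀ r, Y k r ≤ ∑ j ∈ E, l j * Y j r) ∧
      ¬ ((∀ i, ∑ j ∈ E, l j * X j i = X k i) ∧ (∀ r, ∑ j ∈ E, l j * Y j r = Y k r))) :
    ((¬ NonExtreme X Y E k) →
      ∀ li : Fin m, (∃ θ l, Feas5 X Y E k li θ l) →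
        ∀ (θ : ℝ) (l : Fin n → ℝ), Feas5 X Y E k li θ l → 1 ≤ θ) ∧
    (((∀ li : Fin m, (∃ l, Feas5 X Y E k li 1 l) ∧
        (∀ (θ : ℝ) (l : Fin n → ℝ), Feas5 X Y E k li θ l → 1 ≤ θ)) ∧
      (∀ q : Fin s, (∃ mu, Feas6 X Y E k q 1 mu) ∧
        (∀ (φ : ℝ) (mu : Fin n → ℝ), Feas6 X Y E k q φ mu → φ ≤ 1))) ↔
      NonExtreme X Y E k) := by

  push_neg at heff
  -- Key lemma: any nonneg combination over E.erase k dominating k must equal k.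
  have key : ∀ l : Fin n → ℝ, (∀ j, 0 ≤ l j) →
      (∀ i, ∑ j ∈ E.erase k, l j * X j i ≤ X k i) →
      (∀ r, Y k r ≤ ∑ j ∈ E.erase k, l j * Y j r) →
      (∀ i, ∑ j ∈ E.erase k, l j * X j i = X k i) ∧
      (∀ r, ∑ j ∈ E.erase k, l j * Y j r = Y k r) := by
    intro l h0 hx hy
    set l' : Fin n → ℝ := Function.update l k 0 with hl'
    have hsum : ∀ f : Fin n → ℝ, ∑ j ∈ E, l' j * f j = ∑ j ∈ E.erase k, l j * f j := by
      intro f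
      rw [← Finset.sum_erase_add _ _ hk]
      have h2 : ∀ j ∈ E.erase k, l' j * f j = l j * f j := by
        intro j hj
        rw [hl', Function.update_of_ne (Finset.ne_of_mem_erase hj)]
      rw [Finset.sum_congr rfl h2]
      simp [hl']
    have h := heff l' (fun j => by
        by_cases hj : j = k
        · simp [hl', hj]
        · simpa [hl', Function.update_of_ne hj] using h0 j)
      (fun i => by rw [hsum]; exact hx i)
      (fun r => by rw [hsum]; exact hy r)
    exact ⟨fun i => by rw [← hsum]; exact h.1 i,
           fun r => by rw [← hsum]; exact h.2 r⟩
  have thetaGe : ∀ (li : Fin m) (θ : ℝ) (l : Fin n → ℝ),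
      Feas5 X Y E k li θ l → 1 ≤ θ := by
    rintro li θ l ⟨h0, hli, hi, hr⟩
    by_contra hθ
    push_neg at hθ
    have hx : ∀ i, ∑ j ∈ E.erase k, l j * X j i ≤ X k i := by
      intro i
      by_cases hil : i = li
      · subst hil
        nlinarith [hX k i]
      · exact hi i hil
    have heq := (key l h0 hx hr).1 li
    nlinarith [hX k li]
  have phiLe : ∀ (q : Fin s) (φ : ℝ) (mu : Fin n → ℝ),
      Feas6 X Y E k q φ mu → φ ≤ 1 := by
    rintro q φ mu ⟨h0, hx, hq, hr⟩
    by_contra hφ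
    push_neg at hφ
    have hy : ∀ r, Y k r ≤ ∑ j ∈ E.erase k, mu j * Y j r := by
      intro r
      by_cases hrq : r = q
      · subst hrq
        nlinarith [hY k r]
      · exact hr r hrq
    have heq := (key mu h0 hx hy).2 q
    nlinarith [hY k q]
  refine ⟨fun _ li _ => thetaGe li, ?_⟩
  constructor
  · rintro ⟨h5, h6⟩
    rcases Nat.eq_zero_or_pos m with hm | hm
    · rcases Nat.eq_zero_or_pos s with hs | hs
      · exact ⟨fun _ => 0, fun _ => le_rfl,
          fun i => absurd i.isLt (by omega), fun r => absurd r.isLt (by omega)⟩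
      · obtain ⟨mu, hmu0, hmux, hmuq, hmur⟩ := (h6 ⟨0, hs⟩).1
        have hy : ∀ r, Y k r ≤ ∑ j ∈ E.erase k, mu j * Y j r := by
          intro r
          by_cases hrq : r = ⟨0, hs⟩
          · subst hrq
            simpa using hmuq
          · exact hmur r hrq
        obtain ⟨hex, hey⟩ := key mu hmu0 hmux hy
        exact ⟨mu, hmu0, hex, hey⟩
    · obtain ⟨l, hl0, hlli, hli, hlr⟩ := (h5 ⟨0, hm⟩).1
      have hx : ∀ i, ∑ j ∈ E.erase k, l j * X j i ≤ X k i := by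
        intro i
        by_cases hil : i = ⟨0, hm⟩
        · subst hil
          simpa using hlli
        · exact hli i hil
      obtain ⟨hex, hey⟩ := key l hl0 hx hlr
      exact ⟨l, hl0, hex, hey⟩
  · rintro ⟨l, h0, hxeq, hyeq⟩
    constructor
    · intro li
      refine ⟨⟨l, h0, by rw [one_mul]; exact (hxeq li).le,
        fun i _ => (hxeq i).le, fun r => (hyeq r).ge⟩, thetaGe li⟩
    · intro q
      refine ⟨⟨l, h0, fun i => (hxeq i).le, by rw [one_mul]; exact (hyeq q).ge,
        fun r _ => (hyeq r).ge⟩, phiLe q⟩
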